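/- Fix integers m ≥ 0, d ≥ 2 and set μ_{m,i} = i(i+m+d-1). Define q_{m,n}(x) = ∏_{i=1}^n (μ_{m,i} − x)/μ_{m,i}. Then q_{m,n}(x) = Σ_{j=0}^n (−1)^j ∏_{i=1}^j (x − μ_{m,i-1})/μ_{m,i}. -/
import Mathlib


open scoped BigOperators

lemma q_aux (μ : ℕ → ℝ) (h0 : μ 0 = 0) (hne : ∀ i, μ (i + 1) ≠ 0) (x : ℝ) (n : ℕ) :
    (∏ i ∈ Finset.range n, (μ (i + 1) - x) / μ (i + 1))
      = ∑ j ∈ Finset.range (n + 1), (-1 : ℝ) ^ j *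
          ∏ i ∈ Finset.range j, (x - μ i) / μ (i + 1) := by
  induction n with
  | zero => simp
  | succ n ih =>
    rw [Finset.prod_range_succ, Finset.sum_range_succ, ← ih]
    have hq : (∏ i ∈ Finset.range (n + 1), (x - μ i) / μ (i + 1))
        = (x / μ (n + 1)) * ((-1 : ℝ) ^ n * ∏ i ∈ Finset.range n, (μ (i + 1) - x) / μ (i + 1)) := by
      rw [Finset.prod_div_distrib, Finset.prod_range_succ' (fun i => x - μ i),
        Finset.prod_range_succ (fun i => μ (i + 1)), h0, sub_zero]
      have : ∀ i, x - μ (i + 1) = (-1) * (μ (i + 1) - x) := by intro i; ring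
      simp only [this]
      rw [Finset.prod_mul_distrib, Finset.prod_const, Finset.prod_div_distrib, Finset.card_range]
      ring
    have h1 : μ (n + 1) ≠ 0 := hne n
    have h2 : (∏ i ∈ Finset.range n, μ (i + 1)) ≠ 0 :=
      Finset.prod_ne_zero_iff.mpr fun i _ => hne i
    have h3 : ((-1 : ℝ)) ^ (n + 1) * (-1) ^ n = -1 := by
      rw [← pow_add]; exact Odd.neg_one_pow ⟨n, by ring⟩
    have h4 : (-1 : ℝ) ^ (n + 1) *
        (x / μ (n + 1) * ((-1) ^ n * ∏ i ∈ Finset.range n, (μ (i + 1) - x) / μ (i + 1)))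
        = -(x / μ (n + 1)) * ∏ i ∈ Finset.range n, (μ (i + 1) - x) / μ (i + 1) := by
      linear_combination (x / μ (n + 1) * ∏ i ∈ Finset.range n, (μ (i + 1) - x) / μ (i + 1)) * h3
    rw [hq, h4, Finset.prod_div_distrib]
    field_simp
    ring

/-- With μ_{m,i} = i(i+m+d-1), the interpolating polynomial
q_{m,n}(x) = ∏_{i=1}^n (μ_{m,i} − x)/μ_{m,i} equals
Σ_{j=0}^n (−1)^j ∏_{i=1}^j (x − μ_{m,i-1})/μ_{m,i}. -/
theorem q_mn_expansion (d m n : ℕ) (hd : 2 ≤ d) (x : ℝ) :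
    (∏ i ∈ Finset.range n,
        (((i + 1) * (i + 1 + m + d - 1) : ℝ) - x) / ((i + 1) * (i + 1 + m + d - 1) : ℝ))
      = ∑ j ∈ Finset.range (n + 1), (-1 : ℝ) ^ j *
          ∏ i ∈ Finset.range j,
            (x - (i * (i + m + d - 1) : ℝ)) / ((i + 1) * (i + 1 + m + d - 1) : ℝ) := by
  have key := q_aux (fun i => (i : ℝ) * ((i : ℝ) + m + d - 1)) (by simp)
    (fun i => by
      have h2 : (2 : ℝ) ≤ (d : ℝ) := by exact_mod_cast hd
      have : (0 : ℝ) < ((i : ℝ) + 1) * (((i : ℝ) + 1) + m + d - 1) := by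
        apply mul_pos <;> [positivity; nlinarith [Nat.cast_nonneg (α := ℝ) i, Nat.cast_nonneg (α := ℝ) m]]
      push_cast
      exact ne_of_gt this) x n
  push_cast at key ⊢
  exact key
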